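/- arXiv:2106.12269 — 9 statements merged into one kernel-verified Lean document; each statement's English description precedes it below -/
import Mathlib

section
/- A greedy ordering procedure that repeatedly appends to an initially empty sequence any unordered vertex v for which some allowed parent set S ∈ D(v) satisfies S ⊆ (set of ordered vertices), terminates with a complete ordering of V if and only if there exists a choice function f with f(v) ∈ D(v) for each v such that the directed graph with edge set { (u,v) : u ∈ f(v) } is acyclic. -/
/-- The greedy ordering procedure can terminate with a complete ordering of `V`
(i.e. there is an ordering in which every vertex has some allowed parent set
contained in the preceding vertices) iff there is a choice `f v ∈ D v` of a
parent set for each vertex whose induced directed graph is acyclic. -/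
theorem stmt2 {V : Type*} [Fintype V] [DecidableEq V]
    (D : V → Finset (Finset V)) (hD : ∀ v, (D v).Nonempty)
    (hself : ∀ v, ∀ S ∈ D v, v ∉ S) :
    (∃ L : List V, L.Nodup ∧ (∀ v, v ∈ L) ∧
        ∀ v, ∃ S ∈ D v, ∀ u ∈ S, L.idxOf u < L.idxOf v) ↔
      (∃ f : V → Finset V, (∀ v, f v ∈ D v) ∧
        ¬ ∃ v, Relation.TransGen (fun u w => u ∈ f w) v v) := by
  constructor
  · rintro ⟨L, hnd, hmem, hprop⟩
    choose f hfD hflt using hprop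
    refine ⟨f, hfD, ?_⟩
    rintro ⟨v, hv⟩
    have key : ∀ a b, Relation.TransGen (fun u w => u ∈ f w) a b →
        L.idxOf a < L.idxOf b := by
      intro a b hab
      induction hab with
      | single h => exact hflt _ _ h
      | tail _ h ih => exact ih.trans (hflt _ _ h)
    exact lt_irrefl _ (key v v hv)
  · rintro ⟨f, hfD, hacyc⟩
    set s : V → V → Prop := Relation.TransGen (fun u w => u ∈ f w) with hs
    have strans : ∀ {a b c}, s a b → s b c → s a c := fun h1 h2 => h1.trans h2
    have sirr : ∀ a, ¬ s a a := fun a h => hacyc ⟨a, h⟩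
    set le : V → V → Prop := fun a b => s a b ∨ a = b with hle'
    haveI : IsPartialOrder V le :=
      { refl := fun a => Or.inr rfl
        trans := by
          rintro a b c (hab | rfl) (hbc | rfl)
          · exact Or.inl (strans hab hbc)
          · exact Or.inl hab
          · exact Or.inl hbc
          · exact Or.inr rfl
        antisymm := by
          rintro a b (hab | h1) (hba | h2)
          · exact absurd (strans hab hba) (sirr a)
          · exact h2.symm
          · exact h1
          · exact h1 }
    obtain ⟨t, ht, hext⟩ := extend_partialOrder le
    haveI : DecidableRel t := Classical.decRel t
    haveI h1 : IsTrans V t := ht.toIsPartialOrder.toIsPreorder.toIsTrans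
    haveI h2 : IsAntisymm V t := ht.toIsPartialOrder.toAntisymm
    haveI h3 : IsTotal V t := ht.toTotal
    set L : List V := Finset.sort Finset.univ t with hL
    have hnd : L.Nodup := Finset.sort_nodup _ t
    have hmem : ∀ v, v ∈ L := fun v => (Finset.mem_sort (r := t)).mpr (Finset.mem_univ v)
    have hsorted : L.Pairwise t := Finset.pairwise_sort _ t
    refine ⟨L, hnd, hmem, fun v => ⟨f v, hfD v, fun u hu => ?_⟩⟩
    have hsuv : s u v := Relation.TransGen.single hu
    have hne : u ≠ v := by rintro rfl; exact sirr u hsuv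
    have htuv : t u v := hext u v (Or.inl hsuv)
    by_contra hcon
    push_neg at hcon
    have hul : L.idxOf u < L.length := List.idxOf_lt_length_iff.mpr (hmem u)
    have hvl : L.idxOf v < L.length := List.idxOf_lt_length_iff.mpr (hmem v)
    rcases lt_or_eq_of_le hcon with hlt | heq
    · have hfin : (⟨L.idxOf v, hvl⟩ : Fin L.length) < ⟨L.idxOf u, hul⟩ := hlt
      have := hsorted.rel_get_of_lt hfin
      rw [List.idxOf_get, List.idxOf_get] at this
      exact hne (h2.antisymm _ _ htuv this)
    · apply hne
      rw [← List.idxOf_get hul, ← List.idxOf_get hvl]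
      congr 1
      exact Fin.ext heq.symm
end

section
/- If the greedy acyclicity checker halts with an incomplete order, then the set C of unordered vertices is nonempty and every parent set S ∈ D(v) of every v ∈ C intersects C; consequently no acyclic assignment of parent sets exists. -/
/-- If the greedy acyclicity checker halts with an incomplete order `L`
(no unordered vertex has a parent set contained in the ordered vertices), then
the set `C` of unordered vertices is nonempty, every parent set of every vertex
of `C` intersects `C`, and consequently no acyclic assignment of parent sets
exists. -/
theorem stmt3 {V : Type*} [Fintype V] [DecidableEq V]
    (D : V → Finset (Finset V)) (L : List V) (hnd : L.Nodup)
    (hstuck : ∀ v, v ∉ L → ∀ S ∈ D v, ∃ u ∈ S, u ∉ L)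
    (hincomplete : ∃ v : V, v ∉ L) :
    (Finset.univ.filter (fun v : V => v ∉ L)).Nonempty ∧
    (∀ v ∈ Finset.univ.filter (fun v : V => v ∉ L), ∀ S ∈ D v,
        ∃ u ∈ S, u ∈ Finset.univ.filter (fun v : V => v ∉ L)) ∧
    ¬ ∃ f : V → Finset V, (∀ v, f v ∈ D v) ∧
        ¬ ∃ v, Relation.TransGen (fun u w => u ∈ f w) v v := by
  obtain ⟨v₀, hv₀⟩ := hincomplete
  refine ⟨⟨v₀, by simp [hv₀]⟩, ?_, ?_⟩
  · intro v hv S hS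
    simp only [Finset.mem_filter, Finset.mem_univ, true_and] at hv ⊢
    exact hstuck v hv S hS
  · rintro ⟨f, hfD, hacyc⟩
    apply hacyc
    -- build a successor function staying outside L
    have hg : ∀ v : V, v ∉ L → ∃ u : V, u ∈ f v ∧ u ∉ L := by
      intro v hv
      obtain ⟨u, hu1, hu2⟩ := hstuck v hv (f v) (hfD v)
      exact ⟨u, hu1, hu2⟩
    classical
    choose g hg1 hg2 using fun v : {v : V // v ∉ L} => hg v v.2
    set G : {v : V // v ∉ L} → {v : V // v ∉ L} := fun v => ⟨g v, hg2 v⟩ with hG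
    set r : V → V → Prop := fun u w => u ∈ f w with hr
    have key : ∀ (n : ℕ) (x : {v : V // v ∉ L}),
        Relation.TransGen r (G^[n+1] x : {v : V // v ∉ L}).1 x.1 := by
      intro n
      induction n with
      | zero => intro x; exact Relation.TransGen.single (hg1 x)
      | succ n ih =>
        intro x
        have : G^[n+2] x = G (G^[n+1] x) := by
          rw [Function.iterate_succ_apply']
        rw [this]
        exact Relation.TransGen.head (hg1 (G^[n+1] x)) (ih x)
    -- pigeonhole
    obtain ⟨i, j, hij, hmap⟩ := Finite.exists_ne_map_eq_of_infinite
      (fun n : ℕ => G^[n] ⟨v₀, hv₀⟩)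
    rcases hij.lt_or_gt with h | h
    · set x := G^[i] ⟨v₀, hv₀⟩ with hx
      refine ⟨x.1, ?_⟩
      have hfix : G^[(j - i - 1) + 1] x = x := by
        rw [hx, ← Function.iterate_add_apply]
        have : j - i - 1 + 1 + i = j := by omega
        rw [this]; exact hmap.symm
      have := key (j - i - 1) x
      rwa [hfix] at this
    · set x := G^[j] ⟨v₀, hv₀⟩ with hx
      refine ⟨x.1, ?_⟩
      have hfix : G^[(i - j - 1) + 1] x = x := by
        rw [hx, ← Function.iterate_add_apply]
        have : i - j - 1 + 1 + j = i := by omega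
        rw [this]; exact hmap
      have := key (i - j - 1) x
      rwa [hfix] at this
end

section
/- Let P be the primal LP min{c^T x : Ax ≥ b, x ≥ 0} with dual D, and let ŷ be feasible for D with objective value o. If Σ_{i∈I} x_i ≥ 1 is a valid inequality for an optimization problem refined by P, and min_{i∈I} (c_i − (A^T ŷ)_i) = r > 0, then the optimal value of the LP obtained from P by adding this inequality is at least o + r. -/
/-- Adding a valid covering inequality `∑_{i ∈ I} x_i ≥ 1` whose variables all
have reduced cost at least `r > 0` (with the minimum attained) under a feasible
dual solution of objective value `o` raises the optimum of the augmented primal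
LP to at least `o + r`. -/
theorem stmt5 {m n : Type*} [Fintype m] [Fintype n]
    (A : Matrix m n ℝ) (b : m → ℝ) (c : n → ℝ) (yhat : m → ℝ) (o : ℝ)
    (hy0 : ∀ j, 0 ≤ yhat j)
    (hyfeas : ∀ i, A.transpose.mulVec yhat i ≤ c i)
    (ho : o = dotProduct b yhat)
    (I : Finset n) (r : ℝ) (hr : 0 < r)
    (hrc : ∀ i ∈ I, r ≤ c i - A.transpose.mulVec yhat i)
    (hattain : ∃ i ∈ I, c i - A.transpose.mulVec yhat i = r) :
    ∀ x : n → ℝ, (∀ i, 0 ≤ x i) → (∀ j, b j ≤ A.mulVec x j) →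
      1 ≤ ∑ i ∈ I, x i → o + r ≤ dotProduct c x := by
  classical
  intro x hx0 hAx hI
  have key : dotProduct (A.transpose.mulVec yhat) x + r * ∑ i ∈ I, x i
      ≤ dotProduct c x := by
    unfold dotProduct
    rw [Finset.mul_sum, ← Finset.sum_add_sum_compl I]
    have h1 : ∑ i ∈ I, (A.transpose.mulVec yhat i * x i + r * x i)
        ≤ ∑ i ∈ I, c i * x i := by
      apply Finset.sum_le_sum
      intro i hi
      have := hrc i hi
      nlinarith [hx0 i]
    have h2 : ∑ i ∈ Iᶜ, A.transpose.mulVec yhat i * x i ≤ ∑ i ∈ Iᶜ, c i * x i := by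
      apply Finset.sum_le_sum
      intro i _
      exact mul_le_mul_of_nonneg_right (hyfeas i) (hx0 i)
    calc (∑ i ∈ I, A.transpose.mulVec yhat i * x i + ∑ i ∈ Iᶜ, A.transpose.mulVec yhat i * x i)
          + ∑ i ∈ I, r * x i
        = ∑ i ∈ I, (A.transpose.mulVec yhat i * x i + r * x i)
          + ∑ i ∈ Iᶜ, A.transpose.mulVec yhat i * x i := by
          rw [Finset.sum_add_distrib]; ring
      _ ≤ ∑ i ∈ I, c i * x i + ∑ i ∈ Iᶜ, c i * x i := add_le_add h1 h2
      _ = ∑ i : n, c i * x i := Finset.sum_add_sum_compl I _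
  have hweak : dotProduct b yhat ≤ dotProduct (A.transpose.mulVec yhat) x := by
    rw [Matrix.mulVec_transpose, ← Matrix.dotProduct_mulVec]
    unfold dotProduct
    apply Finset.sum_le_sum
    intro j _
    rw [mul_comm]
    exact mul_le_mul_of_nonneg_left (hAx j) (hy0 j)
  have hrI : r ≤ r * ∑ i ∈ I, x i := by nlinarith
  calc o + r = dotProduct b yhat + r := by rw [ho]
    _ ≤ dotProduct (A.transpose.mulVec yhat) x + r * ∑ i ∈ I, x i :=
        add_le_add hweak hrI
    _ ≤ dotProduct c x := key
end

section
/- Every minimal (with respect to set inclusion) nonempty subset C ⊆ V that admits no acyclic assignment of parent sets from domains D is itself a violated cluster, i.e., every parent set of every vertex in C intersects C. -/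
/-- `C` admits an acyclic assignment: there is an ordering of `C` such that each
vertex has some parent set whose intersection with `C` appears earlier. -/
def AdmitsAcyclic {V : Type*} [DecidableEq V]
    (D : V → Finset (Finset V)) (C : Finset V) : Prop :=
  ∃ L : List V, L.Nodup ∧ (∀ v, v ∈ L ↔ v ∈ C) ∧
    ∀ v ∈ L, ∃ S ∈ D v, ∀ u ∈ S, u ∈ C → L.idxOf u < L.idxOf v

/-- Every minimal nonempty subset `C` admitting no acyclic assignment is a
violated cluster: every parent set of every vertex of `C` intersects `C`. -/
theorem stmt9 {V : Type*} [Fintype V] [DecidableEq V]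
    (D : V → Finset (Finset V)) (C : Finset V) (hne : C.Nonempty)
    (hunsat : ¬ AdmitsAcyclic D C)
    (hmin : ∀ C' ⊂ C, C'.Nonempty → AdmitsAcyclic D C') :
    ∀ v ∈ C, ∀ S ∈ D v, ∃ u ∈ S, u ∈ C := by
  intro v hv S hS
  by_contra h
  push_neg at h
  -- S is disjoint from C
  set C' := C.erase v with hC'
  have hsub : C' ⊂ C := Finset.erase_ssubset hv
  -- Build a list L' enumerating C'
  obtain ⟨L', hnd', hmem', hord'⟩ : ∃ L' : List V, L'.Nodup ∧ (∀ u, u ∈ L' ↔ u ∈ C') ∧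
      ∀ w ∈ L', ∃ T ∈ D w, ∀ u ∈ T, u ∈ C' → L'.idxOf u < L'.idxOf w := by
    rcases C'.eq_empty_or_nonempty with he | hne'
    · exact ⟨[], List.nodup_nil, by simp [he], by simp⟩
    · exact hmin C' hsub hne'
  apply hunsat
  refine ⟨v :: L', ?_, ?_, ?_⟩
  · refine List.nodup_cons.mpr ⟨?_, hnd'⟩
    intro hvL'
    exact (Finset.notMem_erase v C) ((hmem' v).mp hvL')
  · intro u
    simp only [List.mem_cons, hmem', hC', Finset.mem_erase]
    constructor
    · rintro (rfl | ⟨_, hu⟩)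
      · exact hv
      · exact hu
    · intro hu
      by_cases huv : u = v
      · exact Or.inl huv
      · exact Or.inr ⟨huv, hu⟩
  · intro w hw
    rcases List.mem_cons.mp hw with rfl | hwL'
    · exact ⟨S, hS, fun u hu huC => absurd huC (h u hu)⟩
    · obtain ⟨T, hT, hTord⟩ := hord' w hwL'
      refine ⟨T, hT, ?_⟩
      have hwv : w ≠ v := fun hwv => (Finset.notMem_erase v C)
        (by rw [hwv] at hwL'; exact (hmem' v).mp hwL')
      intro u hu huC
      rw [List.idxOf_cons_ne _ hwv.symm]
      by_cases huv : u = v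
      · subst huv
        simp [List.idxOf_cons_self]
      · rw [List.idxOf_cons_ne _ (Ne.symm huv)]
        have huC' : u ∈ C' := Finset.mem_erase.mpr ⟨huv, huC⟩
        exact Nat.succ_lt_succ (hTord u hu huC')
end

section
/- Merging two valid orders: let O and Q be two orderings of V, each such that every vertex v has some parent set in D(v) contained in the vertices preceding it in that order. Fix v with S ∈ D(v) contained in the prefix of Q before v. Let O' be the sequence formed by the prefix of O before v, followed by the prefix of Q before v, followed by v, followed by the suffix of O after v, with duplicates removed keeping first occurrences. Then O' is again an ordering of V in which every vertex has some parent set in D(v) among its predecessors, and in O' the set S is contained in the predecessors of v. -/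
/-- Remove duplicates from a list keeping the *first* occurrence of each
element. -/
def dedupFirst {V : Type*} [DecidableEq V] (l : List V) : List V :=
  l.reverse.dedup.reverse

/-- A list `L` is a valid ordering for domains `D`: every vertex has some
parent set contained in its predecessors in `L`. -/
def ValidOrder {V : Type*} [Fintype V] [DecidableEq V]
    (D : V → Finset (Finset V)) (L : List V) : Prop :=
  L.Nodup ∧ (∀ v, v ∈ L) ∧
    ∀ w, ∃ T ∈ D w, ∀ u ∈ T, L.idxOf u < L.idxOf w

lemma mem_dedupFirst {V : Type*} [DecidableEq V] {l : List V} {u : V} :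
    u ∈ dedupFirst l ↔ u ∈ l := by
  simp [dedupFirst]

lemma nodup_dedupFirst {V : Type*} [DecidableEq V] (l : List V) :
    (dedupFirst l).Nodup :=
  List.nodup_reverse.2 (List.nodup_dedup _)

lemma dedupFirst_concat {V : Type*} [DecidableEq V] (l : List V) (a : V) :
    dedupFirst (l ++ [a]) = if a ∈ l then dedupFirst l else dedupFirst l ++ [a] := by
  unfold dedupFirst
  rw [List.reverse_append]
  simp only [List.reverse_singleton, List.singleton_append]
  by_cases h : a ∈ l
  · rw [List.dedup_cons_of_mem (by simpa using h), if_pos h]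
  · rw [List.dedup_cons_of_notMem (by simpa using h), if_neg h, List.reverse_cons]

lemma indexOf_dedupFirst_lt {V : Type*} [DecidableEq V] (l : List V) :
    ∀ u w, u ∈ l → w ∈ l → l.idxOf u < l.idxOf w →
      (dedupFirst l).idxOf u < (dedupFirst l).idxOf w := by
  induction l using List.reverseRecOn with
  | nil => simp
  | append_singleton l a ih =>
    intro u w hu hw h
    rw [dedupFirst_concat]
    by_cases ha : a ∈ l
    · rw [if_pos ha]
      have hu' : u ∈ l := by
        rcases List.mem_append.1 hu with h' | h'
        · exact h'
        · simp only [List.mem_singleton] at h'; exact h' ▸ ha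
      have hw' : w ∈ l := by
        rcases List.mem_append.1 hw with h' | h'
        · exact h'
        · simp only [List.mem_singleton] at h'; exact h' ▸ ha
      rw [List.idxOf_append_of_mem hu', List.idxOf_append_of_mem hw'] at h
      exact ih u w hu' hw' h
    · rw [if_neg ha]
      by_cases hua : u = a
      · subst hua
        exfalso
        rw [List.idxOf_append_of_notMem ha, List.idxOf_cons_self] at h
        rcases List.mem_append.1 hw with h' | h'
        · rw [List.idxOf_append_of_mem h'] at h
          have := List.idxOf_lt_length_iff.2 h'
          omega
        · simp only [List.mem_singleton] at h'
          subst h'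
          rw [List.idxOf_append_of_notMem ha, List.idxOf_cons_self] at h
          omega
      · have hu' : u ∈ l := by
          rcases List.mem_append.1 hu with h' | h'
          · exact h'
          · simp only [List.mem_singleton] at h'; exact absurd h' hua
        have hud : u ∈ dedupFirst l := mem_dedupFirst.2 hu'
        by_cases hwa : w = a
        · subst hwa
          have haD : w ∉ dedupFirst l := fun hc => ha (mem_dedupFirst.1 hc)
          rw [List.idxOf_append_of_mem hud, List.idxOf_append_of_notMem haD,
            List.idxOf_cons_self]
          have := List.idxOf_lt_length_iff.2 hud
          omega
        · have hw' : w ∈ l := by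
            rcases List.mem_append.1 hw with h' | h'
            · exact h'
            · simp only [List.mem_singleton] at h'; exact absurd h' hwa
          have hwd : w ∈ dedupFirst l := mem_dedupFirst.2 hw'
          rw [List.idxOf_append_of_mem hu', List.idxOf_append_of_mem hw'] at h
          rw [List.idxOf_append_of_mem hud, List.idxOf_append_of_mem hwd]
          exact ih u w hu' hw' h

lemma dropWhile_ne_eq_cons {V : Type*} [DecidableEq V] {l : List V} {v : V} (h : v ∈ l) :
    l.dropWhile (fun w => decide (w ≠ v)) = v :: (l.dropWhile (fun w => decide (w ≠ v))).tail := by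
  induction l with
  | nil => cases h
  | cons a l ih =>
    by_cases hav : a = v
    · subst hav
      simp [List.dropWhile_cons]
    · rw [List.dropWhile_cons, if_pos (by simpa using hav)]
      have hvl : v ∈ l := by
        rcases List.mem_cons.1 h with h' | h'
        · exact absurd h'.symm hav
        · exact h'
      exact ih hvl

lemma mem_takeWhile_ne_iff {V : Type*} [DecidableEq V] {l : List V} {v u : V} :
    u ∈ l.takeWhile (fun w => decide (w ≠ v)) ↔ l.idxOf u < l.idxOf v := by
  induction l with
  | nil => simp
  | cons a l ih =>
    by_cases hav : a = v
    · subst hav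
      simp [List.takeWhile_cons, List.idxOf_cons_self]
    · rw [List.takeWhile_cons, if_pos (by simpa using hav),
        List.idxOf_cons_ne _ hav]
      by_cases hua : u = a
      · subst hua
        simp [List.idxOf_cons_self]
      · rw [List.idxOf_cons_ne _ (fun h => hua h.symm)]
        simp only [List.mem_cons, fun h : u = a => hua h, false_or]
        constructor
        · intro hmem
          have := ih.1 hmem
          omega
        · intro hlt
          exact ih.2 (by omega)

/-- Merging two valid orders: the prefix of `O` before `v`, followed by the
prefix of `Q` before `v`, then `v`, then the suffix of `O` after `v`, with
duplicates removed keeping first occurrences, is again a valid order, and it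
supports the value `S ∈ D v` supported by `Q`. -/
theorem stmt10 {V : Type*} [Fintype V] [DecidableEq V]
    (D : V → Finset (Finset V)) (O Q : List V)
    (hO : ValidOrder D O) (hQ : ValidOrder D Q)
    (v : V) (S : Finset V) (hS : S ∈ D v)
    (hSQ : ∀ u ∈ S, Q.idxOf u < Q.idxOf v) :
    ValidOrder D (dedupFirst (O.takeWhile (fun w => decide (w ≠ v)) ++
        Q.takeWhile (fun w => decide (w ≠ v)) ++
        v :: (O.dropWhile (fun w => decide (w ≠ v))).tail)) ∧
    ∀ u ∈ S,
      (dedupFirst (O.takeWhile (fun w => decide (w ≠ v)) ++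
        Q.takeWhile (fun w => decide (w ≠ v)) ++
        v :: (O.dropWhile (fun w => decide (w ≠ v))).tail)).idxOf u <
      (dedupFirst (O.takeWhile (fun w => decide (w ≠ v)) ++
        Q.takeWhile (fun w => decide (w ≠ v)) ++
        v :: (O.dropWhile (fun w => decide (w ≠ v))).tail)).idxOf v := by
  obtain ⟨hOnd, hOmem, hOval⟩ := hO
  obtain ⟨hQnd, hQmem, hQval⟩ := hQ
  set A := O.takeWhile (fun w => decide (w ≠ v)) with hA
  set B := Q.takeWhile (fun w => decide (w ≠ v)) with hB
  set C := (O.dropWhile (fun w => decide (w ≠ v))).tail with hC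
  set L0 := A ++ B ++ v :: C with hL0
  -- basic facts
  have hvO : v ∈ O := hOmem v
  have hvQ : v ∈ Q := hQmem v
  have hOdec : O = A ++ v :: C := by
    conv_lhs => rw [← List.takeWhile_append_dropWhile (p := fun w => decide (w ≠ v)) (l := O)]
    rw [← dropWhile_ne_eq_cons hvO]
  have hvA : v ∉ A := fun hc => by simpa using List.mem_takeWhile_imp hc
  have hvB : v ∉ B := fun hc => by simpa using List.mem_takeWhile_imp hc
  have hvAB : v ∉ A ++ B := by simp [hvA, hvB]
  -- index computations in O
  have hOiA : ∀ u ∈ A, O.idxOf u = A.idxOf u := fun u hu => by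
    rw [hOdec, List.idxOf_append_of_mem hu]
  have hOiv : O.idxOf v = A.length := by
    rw [hOdec, List.idxOf_append_of_notMem hvA, List.idxOf_cons_self]
    omega
  have hOiC : ∀ u, u ∉ A → u ≠ v → O.idxOf u = A.length + (C.idxOf u + 1) := by
    intro u huA huv
    rw [hOdec, List.idxOf_append_of_notMem huA,
      List.idxOf_cons_ne _ (fun h => huv h.symm)]
  -- index computations in L0
  have hLiA : ∀ u ∈ A, L0.idxOf u = A.idxOf u := fun u hu => by
    rw [hL0, List.idxOf_append_of_mem (List.mem_append_left B hu),
      List.idxOf_append_of_mem hu]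
  have hLiB : ∀ u, u ∉ A → u ∈ B → L0.idxOf u = A.length + B.idxOf u := by
    intro u huA huB
    rw [hL0, List.idxOf_append_of_mem (List.mem_append_right A huB),
      List.idxOf_append_of_notMem huA]
  have hLiv : L0.idxOf v = A.length + B.length := by
    rw [hL0, List.idxOf_append_of_notMem hvAB, List.idxOf_cons_self,
      List.length_append]
    omega
  have hLiC : ∀ u, u ∉ A → u ∉ B → u ≠ v →
      L0.idxOf u = A.length + B.length + (C.idxOf u + 1) := by
    intro u huA huB huv
    rw [hL0, List.idxOf_append_of_notMem (by simp [huA, huB]),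
      List.idxOf_cons_ne _ (fun h => huv h.symm), List.length_append]
  -- B facts
  have hBQ : ∀ u ∈ B, Q.idxOf u = B.idxOf u := by
    intro u hu
    obtain ⟨t, ht⟩ := (List.takeWhile_prefix (l := Q) (p := fun w => decide (w ≠ v)))
    conv_lhs => rw [← ht]
    exact List.idxOf_append_of_mem hu
  have hBmem : ∀ u, Q.idxOf u < Q.idxOf v ↔ u ∈ B := fun u =>
    ⟨fun h => mem_takeWhile_ne_iff.2 h, fun h => mem_takeWhile_ne_iff.1 h⟩
  -- every vertex is in L0
  have hL0mem : ∀ x, x ∈ L0 := by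
    intro x
    have hx : x ∈ O := hOmem x
    rw [hOdec] at hx
    rw [hL0]
    rcases List.mem_append.1 hx with h | h
    · exact List.mem_append_left _ (List.mem_append_left _ h)
    · exact List.mem_append_right _ h
  -- the key claim at the level of L0
  have key : ∀ w, ∃ T ∈ D w, ∀ u ∈ T, L0.idxOf u < L0.idxOf w := by
    intro w
    by_cases hwA : w ∈ A
    · -- use O's witness
      obtain ⟨T, hT, hTlt⟩ := hOval w
      refine ⟨T, hT, fun u hu => ?_⟩
      have h1 := hTlt u hu
      rw [hOiA w hwA] at h1
      have hwlen : A.idxOf w < A.length := List.idxOf_lt_length_iff.2 hwA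
      have huA : u ∈ A := by
        by_contra huA
        by_cases huv : u = v
        · subst huv; rw [hOiv] at h1; omega
        · rw [hOiC u huA huv] at h1; omega
      rw [hLiA u huA, hLiA w hwA, ← hOiA u huA, ← hOiA w hwA]
      exact hTlt u hu
    · by_cases hwB : w ∈ B
      · -- use Q's witness
        obtain ⟨T, hT, hTlt⟩ := hQval w
        refine ⟨T, hT, fun u hu => ?_⟩
        have hwv : Q.idxOf w < Q.idxOf v := (hBmem w).2 hwB
        have h1 := hTlt u hu
        have huB : u ∈ B := (hBmem u).1 (by omega)
        have h2 : B.idxOf u < B.idxOf w := by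
          rw [← hBQ u huB, ← hBQ w hwB]; exact h1
        rw [hLiB w hwA hwB]
        by_cases huA : u ∈ A
        · rw [hLiA u huA]
          have := List.idxOf_lt_length_iff.2 huA
          omega
        · rw [hLiB u huA huB]; omega
      · by_cases hwv : w = v
        · -- use S
          subst hwv
          refine ⟨S, hS, fun u hu => ?_⟩
          have h1 := hSQ u hu
          have huB : u ∈ B := (hBmem u).1 h1
          rw [hLiv]
          by_cases huA : u ∈ A
          · rw [hLiA u huA]
            have := List.idxOf_lt_length_iff.2 huA
            omega
          · rw [hLiB u huA huB]
            have := List.idxOf_lt_length_iff.2 huB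
            omega
        · -- w ∈ C, use O's witness
          obtain ⟨T, hT, hTlt⟩ := hOval w
          refine ⟨T, hT, fun u hu => ?_⟩
          have h1 := hTlt u hu
          rw [hOiC w hwA hwv] at h1
          rw [hLiC w hwA hwB hwv]
          by_cases huA : u ∈ A
          · rw [hLiA u huA]
            have := List.idxOf_lt_length_iff.2 huA
            omega
          · by_cases huB : u ∈ B
            · rw [hLiB u huA huB]
              have := List.idxOf_lt_length_iff.2 huB
              omega
            · by_cases huv : u = v
              · subst huv; rw [hLiv]; omega
              · rw [hLiC u huA huB huv]
                rw [hOiC u huA huv] at h1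
                omega
  have keyS : ∀ u ∈ S, L0.idxOf u < L0.idxOf v := by
    intro u hu
    have h1 := hSQ u hu
    have huB : u ∈ B := (hBmem u).1 h1
    rw [hLiv]
    by_cases huA : u ∈ A
    · rw [hLiA u huA]
      have := List.idxOf_lt_length_iff.2 huA
      omega
    · rw [hLiB u huA huB]
      have := List.idxOf_lt_length_iff.2 huB
      omega
  refine ⟨⟨nodup_dedupFirst _, fun x => mem_dedupFirst.2 (hL0mem x), ?_⟩, ?_⟩
  · intro w
    obtain ⟨T, hT, hTlt⟩ := key w
    exact ⟨T, hT, fun u hu =>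
      indexOf_dedupFirst_lt L0 u w (hL0mem u) (hL0mem w) (hTlt u hu)⟩
  · intro u hu
    exact indexOf_dedupFirst_lt L0 u v (hL0mem u) (hL0mem v) (keyS u hu)
end

section
/- Correctness of the GAC propagator for acyclicity: given domains D admitting at least one acyclic assignment, a value S ∈ D(v) is part of some acyclic assignment (i.e., there is a choice f with f(v) = S and f(w) ∈ D(w) for all w whose induced parent graph is acyclic) if and only if there exists a valid ordering of V in which all elements of S precede v. -/
lemma topo_aux {V : Type*} [DecidableEq V] (r : V → V → Prop)
    (wf : WellFounded (Relation.TransGen r)) :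
    ∀ (n : ℕ) (s : Finset V), s.card = n →
    ∃ L : List V, L.Nodup ∧ (∀ w, w ∈ L ↔ w ∈ s) ∧
      ∀ u w, r u w → u ∈ s → w ∈ s → L.idxOf u < L.idxOf w := by
  intro n
  induction n with
  | zero =>
    intro s hs
    refine ⟨[], List.nodup_nil, ?_, ?_⟩
    · intro w
      simp [Finset.card_eq_zero.mp hs]
    · intro u w _ hu _
      simp [Finset.card_eq_zero.mp hs] at hu
  | succ n ih =>
    intro s hs
    have hne : s.Nonempty := by
      rw [← Finset.card_pos, hs]; omega
    obtain ⟨m, hm, hmin⟩ := wf.has_min s hne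
    have hcard : (s.erase m).card = n := by
      rw [Finset.card_erase_of_mem hm, hs]; omega
    obtain ⟨L, hnd, hmem, hlt⟩ := ih (s.erase m) hcard
    refine ⟨m :: L, ?_, ?_, ?_⟩
    · refine List.nodup_cons.mpr ⟨?_, hnd⟩
      intro h
      exact (Finset.notMem_erase m s) ((hmem m).mp h)
    · intro w
      simp only [List.mem_cons, hmem, Finset.mem_erase]
      constructor
      · rintro (rfl | ⟨_, h⟩)
        exacts [hm, h]
      · intro h
        by_cases hw : w = m
        · exact Or.inl hw
        · exact Or.inr ⟨hw, h⟩
    · intro u w hr hu hw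
      have hwm : w ≠ m := by
        rintro rfl
        exact hmin u hu (Relation.TransGen.single hr)
      rw [List.idxOf_cons_ne _ (Ne.symm hwm)]
      by_cases hum : u = m
      · subst hum
        rw [List.idxOf_cons_self]
        omega
      · have hu' : u ∈ s.erase m := Finset.mem_erase.mpr ⟨hum, hu⟩
        have hw' : w ∈ s.erase m := Finset.mem_erase.mpr ⟨hwm, hw⟩
        have := hlt u w hr hu' hw'
        rw [List.idxOf_cons_ne _ (Ne.symm hum)]
        omega

lemma no_cycle_of_mono {V : Type*} (r : V → V → Prop) (g : V → ℕ)
    (h : ∀ a b, r a b → g a < g b) : ¬ ∃ z, Relation.TransGen r z z := by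
  rintro ⟨z, hz⟩
  have key : ∀ {a b}, Relation.TransGen r a b → g a < g b := by
    intro a b hab
    induction hab with
    | single h' => exact h _ _ h'
    | tail _ h' ih => exact lt_trans ih (h _ _ h')
  exact lt_irrefl _ (key hz)

/-- GAC propagator correctness: assuming some acyclic assignment exists, a value
`S ∈ D v` participates in some acyclic assignment iff there is a valid ordering
of `V` in which all elements of `S` precede `v`. -/
theorem stmt11 {V : Type*} [Fintype V] [DecidableEq V]
    (D : V → Finset (Finset V))
    (hex : ∃ f : V → Finset V, (∀ w, f w ∈ D w) ∧
        ¬ ∃ z, Relation.TransGen (fun u w => u ∈ f w) z z)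
    (v : V) (S : Finset V) (hS : S ∈ D v) :
    (∃ f : V → Finset V, (∀ w, f w ∈ D w) ∧ f v = S ∧
        ¬ ∃ z, Relation.TransGen (fun u w => u ∈ f w) z z) ↔
      (∃ L : List V, L.Nodup ∧ (∀ w, w ∈ L) ∧
        (∀ w, ∃ T ∈ D w, ∀ u ∈ T, L.idxOf u < L.idxOf w) ∧
        ∀ u ∈ S, L.idxOf u < L.idxOf v) := by
  constructor
  · rintro ⟨f, hfD, hfv, hacyc⟩
    set r : V → V → Prop := fun u w => u ∈ f w with hr
    have hirr : IsIrrefl V (Relation.TransGen r) :=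
      ⟨fun z hz => hacyc ⟨z, hz⟩⟩
    have htr : IsTrans V (Relation.TransGen r) :=
      ⟨fun _ _ _ => Relation.TransGen.trans⟩
    have wf : WellFounded (Relation.TransGen r) :=
      Finite.wellFounded_of_trans_of_irrefl _
    obtain ⟨L, hnd, hmem, hlt⟩ := topo_aux r wf (Finset.univ.card) Finset.univ rfl
    refine ⟨L, hnd, fun w => (hmem w).mpr (Finset.mem_univ w), ?_, ?_⟩
    · intro w
      exact ⟨f w, hfD w, fun u hu => hlt u w hu (Finset.mem_univ _) (Finset.mem_univ _)⟩
    · intro u hu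
      exact hlt u v (by rw [hr]; simp [hfv, hu]) (Finset.mem_univ _) (Finset.mem_univ _)
  · rintro ⟨L, _, _, hT, hSv⟩
    classical
    refine ⟨fun w => if w = v then S else (hT w).choose, ?_, by simp, ?_⟩
    · intro w
      by_cases hw : w = v
      · simp [hw, hS]
      · simp only [hw, if_neg, ite_false]
        exact (hT w).choose_spec.1
    · apply no_cycle_of_mono _ (fun w => L.idxOf w)
      intro a b hab
      by_cases hb : b = v
      · simp only [hb, if_pos, ite_true] at hab
        exact hb ▸ hSv a hab
      · simp only [hb, if_neg, ite_false] at hab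
        exact (hT b).choose_spec.2 a hab
end

section
/- The greedy prefix-extension in the GAC propagator computes the maximal deferral of v: starting from the prefix of a valid order O before v, greedily adding any vertex w ≠ v with some parent set in D(w) contained in the current prefix yields a set P such that S ∈ D(v) is supported by some valid ordering if and only if S ⊆ P. -/
open List

private theorem idx_append_not_mem {α} [DecidableEq α] (l₁ l₂ : List α) (a : α) (h : a ∉ l₁) :
    idxOf a (l₁ ++ l₂) = l₁.length + idxOf a l₂ := by
  induction l₁ with
  | nil => simp
  | cons b t ih =>
    simp only [mem_cons, not_or] at h
    have hb : (b == a) = false := by simp; exact fun e => h.1 e.symm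
    rw [cons_append, idxOf_cons, hb]
    simp only [cond_false, ih h.2, length_cons, Nat.succ_add]

private theorem sorted_key_idxOf {α} [DecidableEq α] (key : α → ℕ) (M : List α)
    (hnd : M.Nodup) (hs : M.Pairwise (fun a b => key a ≤ key b))
    {u w : α} (hu : u ∈ M) (hw : w ∈ M) (hk : key u < key w) :
    M.idxOf u < M.idxOf w := by
  have hiu : M.idxOf u < M.length := idxOf_lt_length_iff.2 hu
  have hiw : M.idxOf w < M.length := idxOf_lt_length_iff.2 hw
  by_contra h
  push_neg at h
  rcases lt_or_eq_of_le h with h | h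
  · have := (pairwise_iff_get.1 hs) ⟨M.idxOf w, hiw⟩ ⟨M.idxOf u, hiu⟩ h
    rw [idxOf_get, idxOf_get] at this
    omega
  · have : u = w := by
      have h1 := idxOf_get hiu
      have h2 := idxOf_get hiw
      rw [← h1, ← h2]
      congr 1
      exact Fin.ext h.symm
    subst this; omega

private theorem exists_sorted_list {α} [DecidableEq α] (key : α → ℕ) (Q : Finset α) :
    ∃ M : List α, M.Nodup ∧ (∀ x, x ∈ M ↔ x ∈ Q) ∧
      ∀ u w, u ∈ M → w ∈ M → key u < key w → M.idxOf u < M.idxOf w := by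
  haveI : IsTotal α (fun a b => key a ≤ key b) := ⟨fun a b => le_total _ _⟩
  haveI : IsTrans α (fun a b => key a ≤ key b) := ⟨fun a b c => le_trans⟩
  refine ⟨insertionSort (fun a b => key a ≤ key b) Q.toList, ?_, ?_, ?_⟩
  · exact (perm_insertionSort _ _).nodup_iff.2 Q.nodup_toList
  · intro x
    rw [(perm_insertionSort _ _).mem_iff, Finset.mem_toList]
  · intro u w hu hw hk
    exact sorted_key_idxOf key _ ((perm_insertionSort _ _).nodup_iff.2 Q.nodup_toList)
      (pairwise_insertionSort _ _) hu hw hk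

/-- Iterated reachability in the greedy closure. -/
private def ReachN {V : Type*} (D : V → Finset (Finset V)) (v : V) : ℕ → V → Prop
  | 0 => fun _ => False
  | n + 1 => fun w => w ≠ v ∧ ∃ T ∈ D w, ∀ u ∈ T, ReachN D v n u

private theorem reachN_mono {V : Type*} {D : V → Finset (Finset V)} {v : V} :
    ∀ {n m : ℕ}, n ≤ m → ∀ {w}, ReachN D v n w → ReachN D v m w := by
  intro n
  induction n with
  | zero => intro m _ w h; exact absurd h (by simp [ReachN])
  | succ n ih =>
    intro m hm w h
    obtain ⟨m, rfl⟩ : ∃ m', m = m' + 1 := ⟨m - 1, by omega⟩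
    obtain ⟨hne, T, hT, hTn⟩ := h
    exact ⟨hne, T, hT, fun u hu => ih (by omega) (hTn u hu)⟩

private theorem common_level {V : Type*} [DecidableEq V] {D : V → Finset (Finset V)} {v : V}
    (T : Finset V) (h : ∀ u ∈ T, ∃ n, ReachN D v n u) :
    ∃ N, ∀ u ∈ T, ReachN D v N u := by
  classical
  induction T using Finset.induction_on with
  | empty => exact ⟨0, by simp⟩
  | @insert a s hnotmem ih =>
    obtain ⟨Na, hNa⟩ := h a (Finset.mem_insert_self a s)
    obtain ⟨Ns, hNs⟩ := ih (fun u hu => h u (Finset.mem_insert_of_mem hu))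
    refine ⟨max Na Ns, fun u hu => ?_⟩
    rcases Finset.mem_insert.1 hu with rfl | hu
    · exact reachN_mono (le_max_left _ _) hNa
    · exact reachN_mono (le_max_right _ _) (hNs u hu)

/-- The greedy prefix-extension of the GAC propagator computes the maximal
deferral of `v`: starting from the prefix of a valid order `O` before `v` and
closing under "add `w ≠ v` when some parent set of `w` is contained in the
current set", the resulting least closed set `P` characterises the supported
values of `v`: a value `S ∈ D v` is supported by some valid ordering iff
`S ⊆ P`. -/
theorem stmt12 {V : Type*} [Fintype V] [DecidableEq V]
    (D : V → Finset (Finset V)) (O : List V)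
    (hOnd : O.Nodup) (hOc : ∀ w, w ∈ O)
    (hOvalid : ∀ w, ∃ T ∈ D w, ∀ u ∈ T, O.idxOf u < O.idxOf w)
    (v : V) (P : Finset V)
    (hPv : v ∉ P)
    (hPprefix : ∀ u, O.idxOf u < O.idxOf v → u ∈ P)
    (hPclosed : ∀ w, w ≠ v → (∃ T ∈ D w, ∀ u ∈ T, u ∈ P) → w ∈ P)
    (hPleast : ∀ Q : Finset V,
      (∀ u, O.idxOf u < O.idxOf v → u ∈ Q) →
      (∀ w, w ≠ v → (∃ T ∈ D w, ∀ u ∈ T, u ∈ Q) → w ∈ Q) → P ⊆ Q) :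
    ∀ S ∈ D v,
      ((∃ L : List V, L.Nodup ∧ (∀ w, w ∈ L) ∧
          (∀ w, ∃ T ∈ D w, ∀ u ∈ T, L.idxOf u < L.idxOf w) ∧
          ∀ u ∈ S, L.idxOf u < L.idxOf v) ↔ ∀ u ∈ S, u ∈ P) := by
  classical
  intro S hS
  constructor
  · -- forward: a supporting ordering forces S ⊆ P
    rintro ⟨L, hLnd, hLc, hLvalid, hSL⟩ u hu
    have main : ∀ n, ∀ w, L.idxOf w < L.idxOf v → L.idxOf w < n → w ∈ P := by
      intro n
      induction n with
      | zero => intro w _ h; omega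
      | succ n ih =>
        intro w hwv hwn
        have hwne : w ≠ v := fun e => by subst e; omega
        obtain ⟨T, hT, hTlt⟩ := hLvalid w
        exact hPclosed w hwne ⟨T, hT, fun x hx =>
          ih x (lt_trans (hTlt x hx) hwv) (by have := hTlt x hx; omega)⟩
    exact main (L.idxOf u + 1) u (hSL u hu) (Nat.lt_succ_self _)
  · -- backward: construct an ordering from P
    intro hSP
    -- every element reachable at some level lies in P
    have hReachP : ∀ n w, ReachN D v n w → w ∈ P := by
      intro n
      induction n with
      | zero => intro w h; exact absurd h (by simp [ReachN])
      | succ n ih =>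
        rintro w ⟨hne, T, hT, hTn⟩
        exact hPclosed w hne ⟨T, hT, fun u hu => ih u (hTn u hu)⟩
    -- every prefix element is reachable
    have hprefixReach : ∀ w, O.idxOf w < O.idxOf v → ∃ n, ReachN D v n w := by
      have main : ∀ k, ∀ w, O.idxOf w < O.idxOf v → O.idxOf w < k →
          ∃ n, ReachN D v n w := by
        intro k
        induction k with
        | zero => intro w _ h; omega
        | succ k ih =>
          intro w hwv hwk
          have hwne : w ≠ v := fun e => by subst e; omega
          obtain ⟨T, hT, hTlt⟩ := hOvalid w
          obtain ⟨N, hN⟩ := common_level T (fun u hu =>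
            ih u (lt_trans (hTlt u hu) hwv) (by have := hTlt u hu; omega))
          exact ⟨N + 1, hwne, T, hT, hN⟩
      exact fun w h => main (O.idxOf w + 1) w h (Nat.lt_succ_self _)
    -- every element of P is reachable
    have hPReach : ∀ w ∈ P, ∃ n, ReachN D v n w := by
      intro w hw
      have hsub := hPleast (Finset.univ.filter (fun w => ∃ n, ReachN D v n w))
        (fun u hu => Finset.mem_filter.2 ⟨Finset.mem_univ _, hprefixReach u hu⟩)
        (by
          rintro w hne ⟨T, hT, hTQ⟩
          obtain ⟨N, hN⟩ := common_level T (fun u hu => (Finset.mem_filter.1 (hTQ u hu)).2)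
          exact Finset.mem_filter.2 ⟨Finset.mem_univ _, N + 1, hne, T, hT, hN⟩)
      exact (Finset.mem_filter.1 (hsub hw)).2
    set rank : V → ℕ := fun w => sInf {n | ReachN D v n w} with hrankdef
    have hrank1 : ∀ w ∈ P, ReachN D v (rank w) w := fun w hw => Nat.sInf_mem (hPReach w hw)
    obtain ⟨M, hMnd, hMmem, hMsort⟩ := exists_sorted_list rank P
    obtain ⟨Rst, hRnd, hRmem, hRsort⟩ :=
      exists_sorted_list (fun w => O.idxOf w) (Finset.univ.filter (fun w => w ∉ P ∧ w ≠ v))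
    have hRc : ∀ x, x ∈ Rst ↔ (x ∉ P ∧ x ≠ v) := by
      intro x; rw [hRmem x, Finset.mem_filter]; simp
    refine ⟨M ++ v :: Rst, ?_, ?_, ?_, ?_⟩
    · -- Nodup
      rw [nodup_append]
      refine ⟨hMnd, ?_, ?_⟩
      · exact nodup_cons.2 ⟨fun h => ((hRc v).1 h).2 rfl, hRnd⟩
      · intro a haM b haR hab; subst hab
        have haP := (hMmem a).1 haM
        rcases mem_cons.1 haR with rfl | haR
        · exact hPv haP
        · exact ((hRc a).1 haR).1 haP
    · -- complete
      intro w
      by_cases hwP : w ∈ P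
      · exact mem_append.2 (Or.inl ((hMmem w).2 hwP))
      · by_cases hwv : w = v
        · subst hwv; exact mem_append.2 (Or.inr (mem_cons_self))
        · exact mem_append.2 (Or.inr (mem_cons.2 (Or.inr ((hRc w).2 ⟨hwP, hwv⟩))))
    · -- valid ordering
      intro w
      have hvM : v ∉ M := fun h => hPv ((hMmem v).1 h)
      have hidxM : ∀ x ∈ M, (M ++ v :: Rst).idxOf x = M.idxOf x :=
        fun x hx => idxOf_append_of_mem hx
      have hidxMlt : ∀ x ∈ M, (M ++ v :: Rst).idxOf x < M.length := by
        intro x hx; rw [hidxM x hx]; exact idxOf_lt_length_iff.2 hx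
      have hidxv : (M ++ v :: Rst).idxOf v = M.length := by
        rw [idx_append_not_mem _ _ _ hvM, idxOf_cons_self, Nat.add_zero]
      have hidxR : ∀ x ∈ Rst, (M ++ v :: Rst).idxOf x = M.length + 1 + Rst.idxOf x := by
        intro x hx
        have hxP : x ∉ P := ((hRc x).1 hx).1
        have hxv : x ≠ v := ((hRc x).1 hx).2
        have hxM : x ∉ M := fun h => hxP ((hMmem x).1 h)
        rw [idx_append_not_mem _ _ _ hxM, idxOf_cons]
        have : (v == x) = false := by simp; exact fun e => hxv e.symm
        rw [this]; simp; omega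
      by_cases hwP : w ∈ P
      · -- w ∈ M : use its minimal-level derivation
        have h1 := hrank1 w hwP
        rcases hn : rank w with _ | m
        · rw [hn] at h1; exact absurd h1 (by simp [ReachN])
        · rw [hn] at h1
          obtain ⟨hne, T, hT, hTm⟩ := h1
          refine ⟨T, hT, fun u hu => ?_⟩
          have huP : u ∈ P := hReachP m u (hTm u hu)
          have hru : rank u ≤ m := Nat.sInf_le (hTm u hu)
          have hkey : rank u < rank w := by omega
          rw [hidxM u ((hMmem u).2 huP), hidxM w ((hMmem w).2 hwP)]
          exact hMsort u w ((hMmem u).2 huP) ((hMmem w).2 hwP) hkey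
      · by_cases hwv : w = v
        · subst hwv
          refine ⟨S, hS, fun u hu => ?_⟩
          have huM : u ∈ M := (hMmem u).2 (hSP u hu)
          rw [hidxv]; exact hidxMlt u huM
        · -- w ∈ Rst
          have hwR : w ∈ Rst := (hRc w).2 ⟨hwP, hwv⟩
          obtain ⟨T, hT, hTO⟩ := hOvalid w
          refine ⟨T, hT, fun u hu => ?_⟩
          have hwidx := hidxR w hwR
          by_cases huP : u ∈ P
          · have := hidxMlt u ((hMmem u).2 huP); omega
          · by_cases huv : u = v
            · subst huv; rw [hidxv]; omega
            · have huR : u ∈ Rst := (hRc u).2 ⟨huP, huv⟩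
              have := hRsort u w huR hwR (hTO u hu)
              rw [hidxR u huR, hwidx]; omega
    · -- S precedes v
      intro u hu
      have hvM : v ∉ M := fun h => hPv ((hMmem v).1 h)
      have huM : u ∈ M := (hMmem u).2 (hSP u hu)
      have hidxv : (M ++ v :: Rst).idxOf v = M.length := by
        rw [idx_append_not_mem _ _ _ hvM, idxOf_cons_self, Nat.add_zero]
      rw [hidxv, idxOf_append_of_mem huM]
      exact idxOf_lt_length_iff.2 huM
end

section
/- If the deletion-based minimisation algorithm returns a set N, then N admits no acyclic assignment and every proper subset of N does; in particular N is a minimal unsatisfiable set of vertices and hence a violated cluster. -/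
/-- `W` is satisfiable: there is an ordering of `W` such that each vertex has
some parent set whose intersection with `W` lies among its predecessors. -/
def Sat {V : Type*} [DecidableEq V]
    (D : V → Finset (Finset V)) (W : Finset V) : Prop :=
  ∃ L : List V, L.Nodup ∧ (∀ v, v ∈ L ↔ v ∈ W) ∧
    ∀ v ∈ L, ∃ S ∈ D v, ∀ u ∈ S, u ∈ W → L.idxOf u < L.idxOf v

/-- An execution of the deletion-based minimisation algorithm, as a relation
`Run D N C R`: from state `(N, C)` the algorithm returns `R`.  It either is
done (`C = ∅`), or removes `c ∈ C` and, if `N ∪ (C \ {c})` is satisfiable,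
marks `c` as necessary, and otherwise replaces `C` by an unsatisfiable core
(unordered remainder of the greedy checker, a nonempty violated cluster inside
`N ∪ (C \ {c})`) minus `N`. -/
inductive Run {V : Type*} [DecidableEq V] (D : V → Finset (Finset V)) :
    Finset V → Finset V → Finset V → Prop
  | done (N : Finset V) : Run D N ∅ N
  | keep {N C R : Finset V} (c : V) (hc : c ∈ C)
      (hsat : Sat D (N ∪ C.erase c))
      (h : Run D (insert c N) (C.erase c) R) : Run D N C R
  | drop {N C R : Finset V} (c : V) (C' : Finset V) (hc : c ∈ C)
      (hunsat : ¬ Sat D (N ∪ C.erase c))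
      (hsub : C' ⊆ N ∪ C.erase c)
      (hne : C'.Nonempty)
      (hviol : ∀ v ∈ C', ∀ S ∈ D v, ∃ u ∈ S, u ∈ C')
      (h : Run D N (C' \ N) R) : Run D N C R

section Aux
variable {V : Type*} [DecidableEq V]

lemma indexOf_filter_lt (p : V → Prop) [DecidablePred p] :
    ∀ (L : List V), L.Nodup → ∀ a b, a ∈ L.filter (fun x => decide (p x)) →
      b ∈ L.filter (fun x => decide (p x)) → L.idxOf a < L.idxOf b →
      (L.filter (fun x => decide (p x))).idxOf a < (L.filter (fun x => decide (p x))).idxOf b := by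
  intro L
  induction L with
  | nil => intro _ a b ha; simp at ha
  | cons x t ih =>
    intro hnd a b ha hb hlt
    have hxt : x ∉ t := (List.nodup_cons.1 hnd).1
    have hndt := (List.nodup_cons.1 hnd).2
    by_cases hpx : p x
    · have hf : (x :: t).filter (fun x => decide (p x)) = x :: t.filter (fun x => decide (p x)) := by
        simp [List.filter_cons, hpx]
      rw [hf] at ha hb ⊢
      rcases eq_or_ne b x with rfl | hbx
      · rw [List.idxOf_cons_self] at hlt; omega
      · rcases eq_or_ne a x with rfl | hax
        · rw [List.idxOf_cons_self, List.idxOf_cons_ne _ hbx.symm]; omega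
        · have ha' : a ∈ t.filter (fun x => decide (p x)) := by
            rcases List.mem_cons.1 ha with h | h; exact absurd h hax; exact h
          have hb' : b ∈ t.filter (fun x => decide (p x)) := by
            rcases List.mem_cons.1 hb with h | h; exact absurd h hbx; exact h
          rw [List.idxOf_cons_ne _ hax.symm, List.idxOf_cons_ne _ hbx.symm] at hlt ⊢
          have := ih hndt a b ha' hb' (by omega)
          omega
    · have hf : (x :: t).filter (fun x => decide (p x)) = t.filter (fun x => decide (p x)) := by
        simp [List.filter_cons, hpx]
      rw [hf] at ha hb ⊢
      have hax : a ≠ x := fun h => hxt (h ▸ (List.mem_filter.1 ha).1)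
      have hbx : b ≠ x := fun h => hxt (h ▸ (List.mem_filter.1 hb).1)
      rw [List.idxOf_cons_ne _ hax.symm, List.idxOf_cons_ne _ hbx.symm] at hlt
      exact ih hndt a b ha hb (by omega)

lemma sat_mono (D : V → Finset (Finset V)) {W W' : Finset V} (hsub : W' ⊆ W)
    (h : Sat D W) : Sat D W' := by
  obtain ⟨L, hnd, hmem, hpar⟩ := h
  refine ⟨L.filter (fun x => decide (x ∈ W')), hnd.filter _, ?_, ?_⟩
  · intro v
    simp only [List.mem_filter, decide_eq_true_eq]
    constructor
    · rintro ⟨_, h⟩; exact h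
    · intro h; exact ⟨(hmem v).2 (hsub h), h⟩
  · intro v hv
    have hv' := List.mem_filter.1 hv
    obtain ⟨S, hS, hSp⟩ := hpar v hv'.1
    refine ⟨S, hS, fun u hu huW' => ?_⟩
    have huL : u ∈ L.filter (fun x => decide (x ∈ W')) :=
      List.mem_filter.2 ⟨(hmem u).2 (hsub huW'), by simpa using huW'⟩
    exact indexOf_filter_lt _ L hnd u v huL hv (hSp u hu (hsub huW'))

lemma cluster_unsat (D : V → Finset (Finset V)) {C' W : Finset V}
    (hsub : C' ⊆ W) (hne : C'.Nonempty)
    (hviol : ∀ v ∈ C', ∀ S ∈ D v, ∃ u ∈ S, u ∈ C') : ¬ Sat D W := by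
  rintro ⟨L, hnd, hmem, hpar⟩
  obtain ⟨v, hvC, hvmin⟩ := C'.exists_min_image (fun u => L.idxOf u) hne
  obtain ⟨S, hS, hSp⟩ := hpar v ((hmem v).2 (hsub hvC))
  obtain ⟨u, huS, huC⟩ := hviol v hvC S hS
  have := hSp u huS (hsub huC)
  have := hvmin u huC
  omega
end Aux

section Main
variable {V : Type*} [DecidableEq V]

lemma run_inv (D : V → Finset (Finset V)) :
    ∀ {N C R : Finset V}, Run D N C R → Disjoint N C → ¬ Sat D (N ∪ C) →
      (∀ n ∈ N, Sat D ((N ∪ C).erase n)) →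
      ¬ Sat D R ∧ ∀ n ∈ R, Sat D (R.erase n) := by
  intro N C R hrun
  induction hrun with
  | done N =>
    intro _ h1 h2
    simp only [Finset.union_empty] at h1 h2
    exact ⟨h1, h2⟩
  | @keep N C R c hc hsat h ih =>
    intro hdisj hunsat hnec
    have hcN : c ∉ N := fun h => (Finset.disjoint_left.1 hdisj h) hc
    have hEq : insert c N ∪ C.erase c = N ∪ C := by
      ext x
      simp only [Finset.mem_union, Finset.mem_insert, Finset.mem_erase]
      constructor
      · rintro (⟨rfl | hx⟩ | ⟨_, hx⟩) <;> tauto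
      · rintro (hx | hx)
        · tauto
        · rcases eq_or_ne x c with rfl | hne <;> tauto
    refine ih ?_ ?_ ?_
    · rw [Finset.disjoint_left]
      rintro x hx hx'
      have := (Finset.mem_erase.1 hx').2
      rcases Finset.mem_insert.1 hx with rfl | hx
      · exact (Finset.mem_erase.1 hx').1 rfl
      · exact Finset.disjoint_left.1 hdisj hx this
    · rw [hEq]; exact hunsat
    · intro n hn
      rw [hEq]
      rcases Finset.mem_insert.1 hn with rfl | hn
      · have : (N ∪ C).erase n = N ∪ C.erase n := by
          ext x
          simp only [Finset.mem_erase, Finset.mem_union]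
          constructor
          · rintro ⟨hne, hx | hx⟩
            · exact Or.inl hx
            · exact Or.inr ⟨hne, hx⟩
          · rintro (hx | ⟨hne, hx⟩)
            · exact ⟨fun h => hcN (h ▸ hx), Or.inl hx⟩
            · exact ⟨hne, Or.inr hx⟩
        rw [this]; exact hsat
      · exact hnec n hn
  | @drop N C R c C' hc hunsat' hsub hne hviol h ih =>
    intro hdisj hunsat hnec
    have hsub2 : N ∪ C' \ N ⊆ N ∪ C := by
      intro x hx
      rcases Finset.mem_union.1 hx with hx | hx
      · exact Finset.mem_union_left _ hx
      · rcases Finset.mem_union.1 (hsub (Finset.mem_sdiff.1 hx).1) with hx' | hx'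
        · exact Finset.mem_union_left _ hx'
        · exact Finset.mem_union_right _ (Finset.mem_erase.1 hx').2
    have hCsub : C' ⊆ N ∪ C' \ N := by
      intro x hx
      by_cases hxN : x ∈ N
      · exact Finset.mem_union_left _ hxN
      · exact Finset.mem_union_right _ (Finset.mem_sdiff.2 ⟨hx, hxN⟩)
    refine ih ?_ ?_ ?_
    · exact Finset.disjoint_sdiff
    · exact cluster_unsat D hCsub hne hviol
    · intro n hn
      exact sat_mono D (Finset.erase_subset_erase _ hsub2) (hnec n hn)

end Main

/-- If the deletion-based minimisation algorithm, started on an unsatisfiable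
set `C` with `N = ∅`, returns `N`, then `N` is unsatisfiable, every proper
subset of `N` is satisfiable, and `N` is a violated cluster: every parent set
of every vertex of `N` intersects `N`. -/
theorem stmt16 {V : Type*} [Fintype V] [DecidableEq V]
    (D : V → Finset (Finset V)) (C N : Finset V)
    (hC : ¬ Sat D C) (hrun : Run D ∅ C N) :
    ¬ Sat D N ∧ (∀ N' ⊂ N, Sat D N') ∧
    ∀ v ∈ N, ∀ S ∈ D v, ∃ u ∈ S, u ∈ N := by
  obtain ⟨hN, hmin⟩ := run_inv D hrun (Finset.disjoint_empty_left C)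
    (by simpa using hC) (by simp)
  refine ⟨hN, ?_, ?_⟩
  · intro N' hN'
    obtain ⟨n, hnN, hnN'⟩ := Finset.exists_of_ssubset hN'
    refine sat_mono D ?_ (hmin n hnN)
    intro x hx
    exact Finset.mem_erase.2 ⟨fun h => hnN' (h ▸ hx), hN'.1 hx⟩
  · intro v hv S hS
    by_contra hno
    push_neg at hno
    apply hN
    obtain ⟨L, hnd, hmem, hpar⟩ := hmin v hv
    refine ⟨v :: L, ?_, ?_, ?_⟩
    · exact List.nodup_cons.2 ⟨fun h => ((Finset.mem_erase.1 ((hmem v).1 h)).1 rfl), hnd⟩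
    · intro u
      simp only [List.mem_cons, hmem, Finset.mem_erase]
      constructor
      · rintro (rfl | ⟨_, h⟩); exact hv; exact h
      · intro h
        rcases eq_or_ne u v with rfl | hne
        · exact Or.inl rfl
        · exact Or.inr ⟨hne, h⟩
    · intro w hw
      rcases List.mem_cons.1 hw with rfl | hwL
      · exact ⟨S, hS, fun u hu huN => absurd huN (hno u hu)⟩
      · obtain ⟨S', hS', hSp⟩ := hpar w hwL
        have hwv : w ≠ v := fun h => (Finset.mem_erase.1 ((hmem w).1 hwL)).1 h
        refine ⟨S', hS', fun u hu huN => ?_⟩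
        rw [List.idxOf_cons_ne _ hwv.symm]
        rcases eq_or_ne u v with rfl | huv
        · rw [List.idxOf_cons_self]; omega
        · rw [List.idxOf_cons_ne _ huv.symm]
          have := hSp u hu (Finset.mem_erase.2 ⟨huv, huN⟩)
          omega
end

section
/- In a valid (topological) greedy order produced for domains D, if a value S ∈ D(v) is contained in the set of vertices preceding v in the order, then S is supported by an acyclic assignment. -/
/-- In a valid greedy (topological) order `L` for domains `D`, witnessed by
parent sets `T w` preceding each `w`, any value `S ∈ D v` contained in the
predecessors of `v` is supported by an acyclic assignment, namely `f v = S` and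
`f w = T w` for `w ≠ v`. -/
theorem stmt18 {V : Type*} [Fintype V] [DecidableEq V]
    (D : V → Finset (Finset V)) (L : List V)
    (hnd : L.Nodup) (hc : ∀ w, w ∈ L)
    (T : V → Finset V) (hT : ∀ w, T w ∈ D w)
    (hTpre : ∀ w, ∀ u ∈ T w, L.idxOf u < L.idxOf w)
    (v : V) (S : Finset V) (hS : S ∈ D v)
    (hSpre : ∀ u ∈ S, L.idxOf u < L.idxOf v) :
    (∀ w, (if w = v then S else T w) ∈ D w) ∧
    ¬ ∃ z, Relation.TransGen
        (fun u w => u ∈ (if w = v then S else T w)) z z := by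
  have hstep : ∀ u w, u ∈ (if w = v then S else T w) →
      L.idxOf u < L.idxOf w := by
    intro u w h
    split at h
    · subst ‹w = v›; exact hSpre u h
    · exact hTpre w u h
  constructor
  · intro w
    split
    · subst ‹w = v›; exact hS
    · exact hT w
  · rintro ⟨z, hz⟩
    have : L.idxOf z < L.idxOf z := by
      have : ∀ a b, Relation.TransGen
          (fun u w => u ∈ (if w = v then S else T w)) a b →
          L.idxOf a < L.idxOf b := by
        intro a b h
        induction h with
        | single h => exact hstep _ _ h
        | tail _ h ih => exact ih.trans (hstep _ _ h)
      exact this z z ‹_›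
    exact lt_irrefl _ this
end
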